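/- Let Y be a real random variable with density f given (S=1, D=1, X=x), let p(x) ∈ (0,1), q₁(x) = P(S=1|D=1,X=x), q₀(x) = P(S=1|D=0,X=x), and t₀ the threshold with q₁(x)·P(Y ≤ t₀|S=1,D=1,X=x) = q₀(x). Define ψ̃(t, θ) = E[ S D (Y − t₀) 1{Y ≤ t} | X=x ] − p(x)·θ + t₀·p(x)·q₀(x). Then ∂/∂t ψ̃(t, θ)|_{t=t₀} = 0 for every θ, provided f is continuous at t₀. -/
import Mathlib


open MeasureTheory Set

/-- Neyman orthogonality of the orthogonalized lower-bound moment `ψ̃⁽²⁾` with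
respect to the quantile nuisance: the derivative of the conditional moment in
the trimming threshold vanishes at the truth, for every `θ`. -/
theorem neyman_orthogonality_psi_tilde
    (f : ℝ → ℝ) (t₀ px q₁x q₀x : ℝ) (ψ : ℝ → ℝ → ℝ)
    (hf_nonneg : ∀ y, 0 ≤ f y)
    (hf_int : Integrable f)
    (hf_mass : ∫ y, f y = 1)
    (hf_mom : Integrable (fun y => y * f y))
    (hcont : ContinuousAt f t₀)
    (hpx : px ∈ Set.Ioo (0:ℝ) 1)
    (hq₁ : q₁x ∈ Set.Ioo (0:ℝ) 1) (hq₀ : q₀x ∈ Set.Ioo (0:ℝ) 1)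
    (hthr : q₁x * ∫ y in Set.Iic t₀, f y = q₀x)
    (hψ : ∀ t θ, ψ t θ
        = px * q₁x * (∫ y in Set.Iic t, (y - t₀) * f y) - px * θ + t₀ * px * q₀x) :
    ∀ θ : ℝ, HasDerivAt (fun t => ψ t θ) 0 t₀ := by
  intro θ
  set g : ℝ → ℝ := fun y => (y - t₀) * f y with hg
  have hg_int : Integrable g := by
    have : Integrable (fun y => y * f y - t₀ * f y) :=
      hf_mom.sub (hf_int.const_mul t₀)
    refine this.congr (Filter.Eventually.of_forall fun y => ?_)
    simp [hg]; ring
  have hgcont : ContinuousAt g t₀ :=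
    ((continuousAt_id.sub continuousAt_const).mul hcont)
  have key : HasDerivAt (fun t => ∫ y in Set.Iic t, g y) (g t₀) t₀ := by
    have hF : HasDerivAt (fun t => (∫ y in Set.Iic t₀, g y) + ∫ y in t₀..t, g y)
        (g t₀) t₀ := by
      have := intervalIntegral.integral_hasDerivAt_right
        (hg_int.intervalIntegrable (a := t₀) (b := t₀))
        (hg_int.aestronglyMeasurable.stronglyMeasurableAtFilter)
        hgcont
      simpa using (this.const_add (∫ y in Set.Iic t₀, g y))
    refine hF.congr_of_eventuallyEq (Filter.Eventually.of_forall fun t => ?_)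
    show (∫ y in Set.Iic t, g y) = (∫ y in Set.Iic t₀, g y) + ∫ y in t₀..t, g y
    rw [← intervalIntegral.integral_Iic_sub_Iic (hg_int.integrableOn) (hg_int.integrableOn)]
    ring
  have hgt₀ : g t₀ = 0 := by simp [hg]
  have h1 : HasDerivAt (fun t => px * q₁x * (∫ y in Set.Iic t, g y) - px * θ
      + t₀ * px * q₀x) (px * q₁x * g t₀) t₀ := by
    exact ((key.const_mul (px * q₁x)).sub_const (px * θ)).add_const (t₀ * px * q₀x)
  have h2 : (fun t => ψ t θ) = fun t => px * q₁x * (∫ y in Set.Iic t, g y) - px * θ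
      + t₀ * px * q₀x := by
    funext t; rw [hψ]
  rw [h2]
  simpa [hgt₀] using h1
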